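/- arXiv:1908.07460 — 3 statements merged into one kernel-verified Lean document; each statement's English description precedes it below -/
import Mathlib

section
/- Let Σ̂ be a symmetric positive semidefinite p×p matrix, μ̂ ∈ ℝ^p, α ∈ ℝ^p with support S of cardinality s, λ > 0, and suppose ‖Σ̂ α − μ̂‖_∞ ≤ λ/2. Let α̃ minimize β ↦ (1/2) βᵀ Σ̂ β − βᵀ μ̂ + λ ‖β‖₁ over a set containing both α and α̃. Then the error u = α̃ − α satisfies ‖u_{S^c}‖₁ ≤ 3 ‖u_S‖₁. -/
open Matrix

/-- Cone condition for the ℓ₁-regularized M-estimator: on the event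
`‖Σ̂α − μ̂‖_∞ ≤ λ/2`, the error `u = α̃ − α` satisfies `‖u_{S^c}‖₁ ≤ 3 ‖u_S‖₁`. -/
theorem stmt8 {p : ℕ} (Shat : Matrix (Fin p) (Fin p) ℝ) (hPSD : Shat.PosSemidef)
    (muhat α αt : Fin p → ℝ) (S : Finset (Fin p)) (s : ℕ) (hcard : S.card = s)
    (hsupp : ∀ i ∉ S, α i = 0) (lam : ℝ) (hlam : 0 < lam)
    (hevent : ∀ i, |(Shat.mulVec α - muhat) i| ≤ lam / 2)
    (hbasic : (1 / 2) * (αt ⬝ᵥ Shat.mulVec αt) - αt ⬝ᵥ muhat + lam * ∑ i, |αt i|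
        ≤ (1 / 2) * (α ⬝ᵥ Shat.mulVec α) - α ⬝ᵥ muhat + lam * ∑ i, |α i|) :
    ∑ i ∈ Sᶜ, |αt i - α i| ≤ 3 * ∑ i ∈ S, |αt i - α i| := by
  set u : Fin p → ℝ := αt - α with hu
  -- symmetry
  have hsym : Shatᵀ = Shat := hPSD.1
  have hswap : αt ⬝ᵥ Shat.mulVec α = α ⬝ᵥ Shat.mulVec αt := by
    rw [Matrix.dotProduct_mulVec, ← Matrix.mulVec_transpose, hsym, dotProduct_comm]
  -- PSD
  have hq : 0 ≤ u ⬝ᵥ Shat.mulVec u := by simpa using hPSD.dotProduct_mulVec_nonneg u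
  -- algebraic identity
  have hid : (1 / 2) * (αt ⬝ᵥ Shat.mulVec αt) - (1 / 2) * (α ⬝ᵥ Shat.mulVec α)
      - (αt ⬝ᵥ muhat - α ⬝ᵥ muhat)
      = (1 / 2) * (u ⬝ᵥ Shat.mulVec u) + u ⬝ᵥ (Shat.mulVec α - muhat) := by
    simp only [hu, Pi.sub_apply, Matrix.mulVec_sub, dotProduct_sub,
      sub_dotProduct]
    ring_nf
    linarith [hswap]
  -- bound on the cross term
  have hcross : |u ⬝ᵥ (Shat.mulVec α - muhat)| ≤ (lam / 2) * ∑ i, |u i| := by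
    calc |u ⬝ᵥ (Shat.mulVec α - muhat)| ≤ ∑ i, |u i * (Shat.mulVec α - muhat) i| :=
          Finset.abs_sum_le_sum_abs _ _
      _ ≤ ∑ i, |u i| * (lam / 2) := by
          apply Finset.sum_le_sum
          intro i _
          rw [abs_mul]
          exact mul_le_mul_of_nonneg_left (hevent i) (abs_nonneg _)
      _ = (lam / 2) * ∑ i, |u i| := by rw [← Finset.sum_mul]; ring
  -- main scalar inequality
  have hmain : lam * ∑ i, |αt i| ≤ lam * ∑ i, |α i| + (lam / 2) * ∑ i, |u i| := by
    have h1 : -( (lam / 2) * ∑ i, |u i|) ≤ u ⬝ᵥ (Shat.mulVec α - muhat) :=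
      neg_le_of_abs_le hcross
    linarith [hbasic, hid, hq]
  -- split sums
  have hsplit : ∀ f : Fin p → ℝ, ∑ i, f i = ∑ i ∈ S, f i + ∑ i ∈ Sᶜ, f i := by
    intro f
    rw [Finset.sum_add_sum_compl]
  have hα : ∑ i ∈ Sᶜ, |α i| = 0 := by
    apply Finset.sum_eq_zero
    intro i hi
    rw [hsupp i (Finset.mem_compl.mp hi), abs_zero]
  have hαtC : ∑ i ∈ Sᶜ, |αt i| = ∑ i ∈ Sᶜ, |u i| := by
    apply Finset.sum_congr rfl
    intro i hi
    rw [hu, Pi.sub_apply, hsupp i (Finset.mem_compl.mp hi), sub_zero]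
  have htri : ∑ i ∈ S, |α i| ≤ ∑ i ∈ S, |αt i| + ∑ i ∈ S, |u i| := by
    rw [← Finset.sum_add_distrib]
    apply Finset.sum_le_sum
    intro i _
    have : α i = αt i - u i := by simp [hu]
    rw [this]
    exact (abs_sub _ _).trans (by simp [abs_sub_comm])
  have huS : ∑ i ∈ S, |u i| = ∑ i ∈ S, |αt i - α i| := rfl
  have huC : ∑ i ∈ Sᶜ, |u i| = ∑ i ∈ Sᶜ, |αt i - α i| := rfl
  rw [hsplit (fun i => |αt i|), hsplit (fun i => |α i|), hsplit (fun i => |u i|)] at hmain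
  rw [hα] at hmain
  -- now pure arithmetic
  nlinarith [hmain, htri, hαtC, mul_pos hlam hlam]
end

section
/- Let Σ̂ be symmetric positive semidefinite, μ̂ ∈ ℝ^p, α with support S, |S| = s, λ > 0 with ‖Σ̂α − μ̂‖_∞ ≤ λ/2, and let α̃ satisfy the basic inequality (1/2)α̃ᵀΣ̂α̃ − α̃ᵀμ̂ + λ‖α̃‖₁ ≤ (1/2)αᵀΣ̂α − αᵀμ̂ + λ‖α‖₁. If moreover there is κ₀ > 0 such that uᵀΣ̂u ≥ κ₀² ‖u‖₂² for all u with ‖u_{S^c}‖₁ ≤ 3‖u_S‖₁, then ‖α̃ − α‖₂ ≤ 3 λ √s / κ₀². -/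
open Matrix

/-- ℓ₂-error bound for the ℓ₁-regularized M-estimator under a restricted eigenvalue
condition: `‖α̃ − α‖₂ ≤ 3 λ √s / κ₀²`. -/
theorem stmt9 {p : ℕ} (Shat : Matrix (Fin p) (Fin p) ℝ) (hPSD : Shat.PosSemidef)
    (muhat α αt : Fin p → ℝ) (S : Finset (Fin p)) (s : ℕ) (hcard : S.card = s)
    (hsupp : ∀ i ∉ S, α i = 0) (lam κ : ℝ) (hlam : 0 < lam) (hκ : 0 < κ)
    (hevent : ∀ i, |(Shat.mulVec α - muhat) i| ≤ lam / 2)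
    (hbasic : (1 / 2) * (αt ⬝ᵥ Shat.mulVec αt) - αt ⬝ᵥ muhat + lam * ∑ i, |αt i|
        ≤ (1 / 2) * (α ⬝ᵥ Shat.mulVec α) - α ⬝ᵥ muhat + lam * ∑ i, |α i|)
    (hRE : ∀ u : Fin p → ℝ, (∑ i ∈ Sᶜ, |u i| ≤ 3 * ∑ i ∈ S, |u i|) →
        κ ^ 2 * (u ⬝ᵥ u) ≤ u ⬝ᵥ Shat.mulVec u) :
    Real.sqrt ((αt - α) ⬝ᵥ (αt - α)) ≤ 3 * lam * Real.sqrt s / κ ^ 2 := by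
  set u : Fin p → ℝ := αt - α with hu
  have hsymm : Shatᵀ = Shat := by
    have := hPSD.1
    rwa [Matrix.IsHermitian, conjTranspose_eq_transpose_of_trivial] at this
  have key : ∀ x y : Fin p → ℝ, x ⬝ᵥ Shat *ᵥ y = y ⬝ᵥ Shat *ᵥ x := by
    intro x y
    rw [dotProduct_mulVec, ← mulVec_transpose, hsymm, dotProduct_comm]
  have hαt : αt = u + α := by simp [hu]
  have expand : αt ⬝ᵥ Shat *ᵥ αt
      = u ⬝ᵥ Shat *ᵥ u + 2 * (u ⬝ᵥ Shat *ᵥ α) + α ⬝ᵥ Shat *ᵥ α := by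
    rw [hαt, mulVec_add]
    simp only [dotProduct_add, add_dotProduct]
    rw [key α u]
    ring
  -- step 1: rearranged basic inequality
  have step1 : (1/2) * (u ⬝ᵥ Shat *ᵥ u) + u ⬝ᵥ (Shat *ᵥ α - muhat)
      ≤ lam * ∑ i, |α i| - lam * ∑ i, |αt i| := by
    have hμ : αt ⬝ᵥ muhat = u ⬝ᵥ muhat + α ⬝ᵥ muhat := by
      rw [hαt, add_dotProduct]
    have : u ⬝ᵥ (Shat *ᵥ α - muhat) = u ⬝ᵥ Shat *ᵥ α - u ⬝ᵥ muhat := by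
      rw [dotProduct_sub]
    rw [this]
    nlinarith [hbasic, expand, hμ]
  -- ℓ1 pieces
  set T1 : ℝ := ∑ i ∈ S, |u i| with hT1
  set T2 : ℝ := ∑ i ∈ Sᶜ, |u i| with hT2
  have hsumsplit : ∀ v : Fin p → ℝ, ∑ i, |v i| = ∑ i ∈ S, |v i| + ∑ i ∈ Sᶜ, |v i| := by
    intro v; rw [Finset.sum_add_sum_compl]
  have hT1nonneg : 0 ≤ T1 := Finset.sum_nonneg fun i _ => abs_nonneg _
  have hT2nonneg : 0 ≤ T2 := Finset.sum_nonneg fun i _ => abs_nonneg _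
  -- bound on cross term
  have hcross : |u ⬝ᵥ (Shat *ᵥ α - muhat)| ≤ (lam/2) * (T1 + T2) := by
    have h1 : |u ⬝ᵥ (Shat *ᵥ α - muhat)| ≤ ∑ i, |u i| * (lam/2) := by
      refine (Finset.abs_sum_le_sum_abs _ _).trans (Finset.sum_le_sum fun i _ => ?_)
      rw [abs_mul]
      exact mul_le_mul_of_nonneg_left (hevent i) (abs_nonneg _)
    calc |u ⬝ᵥ (Shat *ᵥ α - muhat)| ≤ ∑ i, |u i| * (lam/2) := h1
      _ = (lam/2) * ∑ i, |u i| := by rw [← Finset.sum_mul]; ring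
      _ = (lam/2) * (T1 + T2) := by rw [hsumsplit]
  -- ℓ1 difference bound
  have hl1 : ∑ i, |α i| - ∑ i, |αt i| ≤ T1 - T2 := by
    rw [hsumsplit α, hsumsplit αt]
    have hS : ∑ i ∈ S, |α i| - ∑ i ∈ S, |αt i| ≤ T1 := by
      rw [hT1, ← Finset.sum_sub_distrib]
      refine Finset.sum_le_sum fun i _ => ?_
      have : u i = αt i - α i := rfl
      calc |α i| - |αt i| ≤ |α i - αt i| := abs_sub_abs_le_abs_sub _ _
        _ = |u i| := by rw [this, abs_sub_comm]
    have hSc : ∑ i ∈ Sᶜ, |αt i| = T2 := by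
      rw [hT2]
      refine Finset.sum_congr rfl fun i hi => ?_
      have h0 : α i = 0 := hsupp i (Finset.mem_compl.mp hi)
      have : u i = αt i - α i := rfl
      rw [this, h0, sub_zero]
    have hScα : ∑ i ∈ Sᶜ, |α i| = 0 := by
      refine Finset.sum_eq_zero fun i hi => ?_
      rw [hsupp i (Finset.mem_compl.mp hi), abs_zero]
    linarith
  -- main quadratic bound
  have hquad : u ⬝ᵥ Shat *ᵥ u ≤ 3 * lam * T1 - lam * T2 := by
    have h2 := step1
    have h3 : -((lam/2) * (T1 + T2)) ≤ u ⬝ᵥ (Shat *ᵥ α - muhat) := neg_le_of_abs_le hcross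
    have h4 : lam * ∑ i, |α i| - lam * ∑ i, |αt i| ≤ lam * (T1 - T2) := by
      have := mul_le_mul_of_nonneg_left hl1 hlam.le
      linarith [this]
    nlinarith
  have hpos : 0 ≤ u ⬝ᵥ Shat *ᵥ u := by
    have := hPSD.dotProduct_mulVec_nonneg u
    simpa using this
  -- cone condition
  have hcone : T2 ≤ 3 * T1 := by nlinarith
  have hre := hRE u hcone
  -- Cauchy-Schwarz: T1 ≤ √s * √(u⬝u)
  have huu : u ⬝ᵥ u = ∑ i, u i ^ 2 := by
    simp [dotProduct, sq]
  have huu_nonneg : 0 ≤ u ⬝ᵥ u := by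
    rw [huu]; positivity
  have hcs : T1 ≤ Real.sqrt s * Real.sqrt (u ⬝ᵥ u) := by
    have h1 : T1 ^ 2 ≤ (S.card : ℝ) * ∑ i ∈ S, |u i| ^ 2 := by
      rw [hT1]
      exact_mod_cast sq_sum_le_card_mul_sum_sq (s := S) (f := fun i => |u i|)
    have h2 : ∑ i ∈ S, |u i| ^ 2 ≤ u ⬝ᵥ u := by
      rw [huu]
      refine (Finset.sum_le_sum_of_subset_of_nonneg (Finset.subset_univ S)
        (fun i _ _ => by positivity)).trans_eq ?_
      exact Finset.sum_congr rfl fun i _ => by rw [sq_abs]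
    have h3 : T1 ^ 2 ≤ (s : ℝ) * (u ⬝ᵥ u) := by
      rw [← hcard]
      calc T1 ^ 2 ≤ (S.card : ℝ) * ∑ i ∈ S, |u i| ^ 2 := h1
        _ ≤ (S.card : ℝ) * (u ⬝ᵥ u) := by
            exact mul_le_mul_of_nonneg_left h2 (Nat.cast_nonneg _)
    calc T1 = Real.sqrt (T1 ^ 2) := by rw [Real.sqrt_sq hT1nonneg]
      _ ≤ Real.sqrt ((s : ℝ) * (u ⬝ᵥ u)) := Real.sqrt_le_sqrt h3
      _ = Real.sqrt s * Real.sqrt (u ⬝ᵥ u) := Real.sqrt_mul (Nat.cast_nonneg _) _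
  set N := Real.sqrt (u ⬝ᵥ u) with hN
  have hN2 : N ^ 2 = u ⬝ᵥ u := Real.sq_sqrt huu_nonneg
  have hNnonneg : 0 ≤ N := Real.sqrt_nonneg _
  have hmain : κ ^ 2 * N ^ 2 ≤ 3 * lam * Real.sqrt s * N := by
    rw [hN2]
    calc κ ^ 2 * (u ⬝ᵥ u) ≤ u ⬝ᵥ Shat *ᵥ u := hre
      _ ≤ 3 * lam * T1 - lam * T2 := hquad
      _ ≤ 3 * lam * T1 := by nlinarith
      _ ≤ 3 * lam * (Real.sqrt s * N) := by
          exact mul_le_mul_of_nonneg_left hcs (by positivity)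
      _ = 3 * lam * Real.sqrt s * N := by ring
  rcases eq_or_lt_of_le hNnonneg with h0 | h0
  · rw [← h0]; positivity
  · rw [div_eq_inv_mul, ← mul_le_mul_iff_right₀ (show (0:ℝ) < κ ^ 2 by positivity)]
    rw [← mul_le_mul_iff_left₀ h0] at hmain
    calc κ ^ 2 * N = κ ^ 2 * N := rfl
      _ ≤ 3 * lam * Real.sqrt s := by nlinarith
      _ = κ ^ 2 * ((κ ^ 2)⁻¹ * (3 * lam * Real.sqrt s)) := by
          field_simp
end

section
/- Let Σ̂ be symmetric positive semidefinite, μ̂ ∈ ℝ^p, λ > 0, γ > 0, and let α̃ minimize β ↦ (1/2) βᵀ Σ̂ β − βᵀ μ̂ + λ‖β‖₁ over {β : ‖β‖₂ ≤ γ}. Then μ̂ᵀ α̃ − α̃ᵀ Σ̂ α̃ ≥ λ ‖α̃‖₁. Consequently, for any c ∈ ℝ, the plug-in estimator θ̃_c = c μ̂ᵀα̃ + (1−c) α̃ᵀΣ̂α̃ satisfies |θ̃_c − θ̃₂| ≥ |c − 2| · λ ‖α̃‖₁, where θ̃₂ = 2μ̂ᵀα̃ − α̃ᵀΣ̂α̃.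 -/
open Matrix

/-- For a minimizer `α̃` of the ℓ₁-regularized objective over the ℓ₂-ball of radius `γ`,
one has `μ̂ᵀα̃ − α̃ᵀΣ̂α̃ ≥ λ‖α̃‖₁`, hence for any `c`,
`|θ̃_c − θ̃₂| ≥ |c − 2| λ ‖α̃‖₁`. -/
theorem stmt11 {p : ℕ} (Shat : Matrix (Fin p) (Fin p) ℝ) (hPSD : Shat.PosSemidef)
    (muhat : Fin p → ℝ) (lam γ : ℝ) (hlam : 0 < lam) (hγ : 0 < γ)
    (αt : Fin p → ℝ) (hfeas : αt ⬝ᵥ αt ≤ γ ^ 2)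
    (hmin : ∀ β : Fin p → ℝ, β ⬝ᵥ β ≤ γ ^ 2 →
        (1 / 2) * (αt ⬝ᵥ Shat.mulVec αt) - αt ⬝ᵥ muhat + lam * ∑ i, |αt i|
          ≤ (1 / 2) * (β ⬝ᵥ Shat.mulVec β) - β ⬝ᵥ muhat + lam * ∑ i, |β i|) :
    lam * ∑ i, |αt i| ≤ muhat ⬝ᵥ αt - αt ⬝ᵥ Shat.mulVec αt ∧
    ∀ c : ℝ, |c - 2| * (lam * ∑ i, |αt i|)
        ≤ |(c * (muhat ⬝ᵥ αt) + (1 - c) * (αt ⬝ᵥ Shat.mulVec αt))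
            - (2 * (muhat ⬝ᵥ αt) - αt ⬝ᵥ Shat.mulVec αt)| := by
  set Q := αt ⬝ᵥ Shat.mulVec αt with hQdef
  set m := αt ⬝ᵥ muhat with hmdef
  set L := ∑ i, |αt i| with hLdef
  have hmm : muhat ⬝ᵥ αt = m := dotProduct_comm muhat αt
  have hL : 0 ≤ L := Finset.sum_nonneg fun i _ => abs_nonneg _
  have hQ : 0 ≤ Q := by
    have := hPSD.dotProduct_mulVec_nonneg αt
    simpa using this
  have hαα : 0 ≤ αt ⬝ᵥ αt := Finset.sum_nonneg fun i _ => mul_self_nonneg _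
  have key : ∀ w : ℝ, 0 ≤ w → w ≤ 1 →
      (1/2) * Q - m + lam * L ≤ (1/2) * (w^2 * Q) - w * m + w * (lam * L) := by
    intro w hw0 hw1
    have hfeas' : (w • αt) ⬝ᵥ (w • αt) ≤ γ ^ 2 := by
      rw [smul_dotProduct, dotProduct_smul, smul_eq_mul, smul_eq_mul, ← mul_assoc]
      calc w * w * (αt ⬝ᵥ αt) ≤ 1 * (γ ^ 2) := by
            apply mul_le_mul (by nlinarith) hfeas hαα zero_le_one
        _ = γ ^ 2 := one_mul _
    have h := hmin (w • αt) hfeas'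
    have e1 : (w • αt) ⬝ᵥ Shat.mulVec (w • αt) = w ^ 2 * Q := by
      rw [mulVec_smul, smul_dotProduct, dotProduct_smul, smul_eq_mul, smul_eq_mul,
        ← mul_assoc, ← sq, hQdef]
    have e2 : (w • αt) ⬝ᵥ muhat = w * m := by
      rw [smul_dotProduct, smul_eq_mul, hmdef]
    have e3 : (∑ i, |(w • αt) i|) = w * L := by
      rw [hLdef, Finset.mul_sum]
      refine Finset.sum_congr rfl fun i _ => ?_
      simp [abs_mul, abs_of_nonneg hw0]
    rw [e1, e2, e3] at h
    linarith [h]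
  have h1 : lam * L ≤ m - Q := by
    by_contra hcon
    push_neg at hcon
    have k0 := key 0 le_rfl zero_le_one
    have hQpos : 0 < Q := by nlinarith
    set w := (m - lam * L) / Q with hwdef
    have hw0 : 0 ≤ w := div_nonneg (by nlinarith) hQ
    have hw1 : w < 1 := by rw [div_lt_one hQpos]; linarith
    have hk := key w hw0 hw1.le
    have hwQ : w * Q = m - lam * L := div_mul_cancel₀ _ (ne_of_gt hQpos)
    have hwwQ : w * (w * Q) = w * (m - lam * L) := by rw [hwQ]
    have h1w : 0 < 1 - w := by linarith
    nlinarith [mul_pos (mul_pos h1w h1w) hQpos, hk, hwQ, hwwQ, sq_nonneg w]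
  refine ⟨by rw [hmm]; exact h1, fun c => ?_⟩
  have e : (c * (muhat ⬝ᵥ αt) + (1 - c) * (αt ⬝ᵥ Shat.mulVec αt))
      - (2 * (muhat ⬝ᵥ αt) - αt ⬝ᵥ Shat.mulVec αt) = (c - 2) * (m - Q) := by
    rw [hmm]; ring
  rw [e, abs_mul]
  have hlamL : 0 ≤ lam * L := mul_nonneg hlam.le hL
  have : lam * L ≤ |m - Q| := le_trans h1 (le_abs_self _)
  exact mul_le_mul_of_nonneg_left this (abs_nonneg _)
end
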